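/- arXiv:1812.03688 — 2 statements merged into one kernel-verified Lean document; each statement's English description precedes it below -/
import Mathlib

section
/- Let ω ∈ [0,1], A ∈ C^{m×m}, D ∈ C^{n×n}, and let Ã ∈ R^{m×m}, D̃ ∈ R^{n×n} be Z-matrices (nonpositive off-diagonal entries) with Ã ≤ A_ω and D̃ ≤ D_ω entrywise. If the Kronecker sum D̃ᵀ⊗I_m + I_n⊗Ã is a nonsingular M-matrix, then Dᵀ⊗I_m + I_n⊗A is nonsingular and |(Dᵀ⊗I_m + I_n⊗A)⁻¹| ≤ (D̃ᵀ⊗I_m + I_n⊗Ã)⁻¹ entrywise. -/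
open Matrix Filter Kronecker

noncomputable section

/-- The ω-weighted linear functional `z ↦ ω·Re z + (1-ω)·Im z`. -/
def wlin (ω : ℝ) (z : ℂ) : ℝ := ω * z.re + (1 - ω) * z.im

/-- The ω-comparison matrix of a complex square matrix. -/
def omegaComp {N : Type*} [DecidableEq N] (ω : ℝ) (B : Matrix N N ℂ) : Matrix N N ℝ :=
  Matrix.of fun i j => if i = j then wlin ω (B i i) else -‖B i j‖

/-- A real square matrix is a nonsingular M-matrix: nonpositive off-diagonal entries and
`M *ᵥ u > 0` entrywise for some entrywise positive `u`. -/
def IsNonsingMMatrix {N : Type*} [Fintype N] (M : Matrix N N ℝ) : Prop :=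
  (∀ i j, i ≠ j → M i j ≤ 0) ∧ ∃ u : N → ℝ, (∀ i, 0 < u i) ∧ ∀ i, 0 < (M *ᵥ u) i

/-- Entrywise absolute value of a complex matrix. -/
def cabs {α β : Type*} (M : Matrix α β ℂ) : Matrix α β ℝ :=
  Matrix.of fun i j => ‖M i j‖

section Aux
variable {N : Type*} [Fintype N] [DecidableEq N]

/-- Monotonicity: a Z-matrix with `M u > 0` for some `u > 0` is inverse-positive. -/
lemma mmatrix_mono (M : Matrix N N ℝ) (hZ : ∀ i j, i ≠ j → M i j ≤ 0)
    (u : N → ℝ) (hu : ∀ i, 0 < u i) (hMu : ∀ i, 0 < (M *ᵥ u) i)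
    (w : N → ℝ) (hw : ∀ i, 0 ≤ (M *ᵥ w) i) : ∀ i, 0 ≤ w i := by
  by_cases hN : Nonempty N
  · obtain ⟨k, -, hk⟩ := Finset.exists_min_image Finset.univ (fun i => w i / u i)
      Finset.univ_nonempty
    have hfk : 0 ≤ w k / u k := by
      by_contra h
      push_neg at h
      set t := w k / u k with ht
      have hv : ∀ j, 0 ≤ w j - t * u j := by
        intro j
        have h1 : t ≤ w j / u j := hk j (Finset.mem_univ j)
        have h2 : t * u j ≤ w j := (le_div_iff₀ (hu j)).1 h1
        linarith
      have hvk : w k - t * u k = 0 := by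
        rw [ht, div_mul_cancel₀ _ (ne_of_gt (hu k))]
        ring
      have hpos : 0 < (M *ᵥ (w - t • u)) k := by
        rw [Matrix.mulVec_sub, Matrix.mulVec_smul]
        have := hw k
        have := hMu k
        simp only [Pi.sub_apply, Pi.smul_apply, smul_eq_mul]
        nlinarith
      have hneg : (M *ᵥ (w - t • u)) k ≤ 0 := by
        simp only [Matrix.mulVec, dotProduct, Pi.sub_apply, Pi.smul_apply, smul_eq_mul]
        apply Finset.sum_nonpos
        intro j _
        rcases eq_or_ne j k with rfl | hjk
        · rw [show w j - t * u j = 0 from hvk]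
          ring_nf
          simp
        · have h1 : M k j ≤ 0 := hZ k j (Ne.symm hjk)
          have h2 : 0 ≤ w j - t * u j := hv j
          nlinarith
      linarith
    intro i
    have h1 : 0 ≤ w i / u i := le_trans hfk (hk i (Finset.mem_univ i))
    have := hu i
    have h2 := (le_div_iff₀ (hu i)).1 h1
    linarith
  · intro i; exact absurd ⟨i⟩ hN

end Aux

section Key
variable {N : Type*} [Fintype N] [DecidableEq N]

lemma row_ineq (M : Matrix N N ℝ) (K : Matrix N N ℂ)
    (hdiag : ∀ i, M i i ≤ ‖K i i‖)
    (hoff : ∀ i j, i ≠ j → M i j ≤ -‖K i j‖)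
    (x : N → ℂ) (i : N) :
    (M *ᵥ fun j => ‖x j‖) i ≤ ‖(K *ᵥ x) i‖ := by
  have hMsplit : (M *ᵥ fun j => ‖x j‖) i
      = M i i * ‖x i‖ + ∑ j ∈ Finset.univ.erase i, M i j * ‖x j‖ := by
    simp only [Matrix.mulVec, dotProduct]
    rw [← Finset.add_sum_erase _ _ (Finset.mem_univ i)]
  have hKsplit : (K *ᵥ x) i
      = K i i * x i + ∑ j ∈ Finset.univ.erase i, K i j * x j := by
    simp only [Matrix.mulVec, dotProduct]
    rw [← Finset.add_sum_erase _ _ (Finset.mem_univ i)]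
  set S := ∑ j ∈ Finset.univ.erase i, K i j * x j with hS
  have htri : ‖K i i * x i‖ - ‖S‖ ≤ ‖(K *ᵥ x) i‖ := by
    rw [hKsplit]
    have h1 := norm_add_le (K i i * x i + S) (-S)
    simp only [add_neg_cancel_right, norm_neg] at h1
    linarith
  have hSb : ‖S‖ ≤ ∑ j ∈ Finset.univ.erase i, ‖K i j‖ * ‖x j‖ := by
    rw [hS]
    refine le_trans (norm_sum_le _ _) ?_
    apply le_of_eq
    exact Finset.sum_congr rfl fun j _ => norm_mul _ _
  have hsum : ∑ j ∈ Finset.univ.erase i, M i j * ‖x j‖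
      ≤ ∑ j ∈ Finset.univ.erase i, -(‖K i j‖ * ‖x j‖) := by
    apply Finset.sum_le_sum
    intro j hj
    have hji : j ≠ i := Finset.ne_of_mem_erase hj
    have h1 := hoff i j (Ne.symm hji)
    have h2 : (0:ℝ) ≤ ‖x j‖ := norm_nonneg _
    nlinarith
  have hdd : M i i * ‖x i‖ ≤ ‖K i i * x i‖ := by
    rw [norm_mul]
    have h2 : (0:ℝ) ≤ ‖x i‖ := norm_nonneg _
    have h1 := hdiag i
    nlinarith
  rw [hMsplit]
  rw [Finset.sum_neg_distrib] at hsum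
  linarith

lemma key_lemma (M : Matrix N N ℝ) (K : Matrix N N ℂ)
    (hZ : ∀ i j, i ≠ j → M i j ≤ 0)
    (u : N → ℝ) (hu : ∀ i, 0 < u i) (hMu : ∀ i, 0 < (M *ᵥ u) i)
    (hdiag : ∀ i, M i i ≤ ‖K i i‖)
    (hoff : ∀ i j, i ≠ j → M i j ≤ -‖K i j‖) :
    IsUnit K.det ∧ ∀ p q, ‖K⁻¹ p q‖ ≤ M⁻¹ p q := by
  -- M is invertible
  have hMdet : M.det ≠ 0 := by
    intro hdet
    obtain ⟨v, hv0, hv⟩ := (Matrix.exists_mulVec_eq_zero_iff).2 hdet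
    have h1 : ∀ i, 0 ≤ v i := mmatrix_mono M hZ u hu hMu v (fun i => by rw [hv]; exact le_refl 0)
    have h2 : ∀ i, 0 ≤ (-v) i :=
      mmatrix_mono M hZ u hu hMu (-v) (fun i => by rw [Matrix.mulVec_neg, hv]; simp)
    apply hv0
    funext i
    have := h2 i
    simp only [Pi.neg_apply] at this
    have := h1 i
    simp only [Pi.zero_apply]
    linarith
  have hMK : M * M⁻¹ = 1 := Matrix.mul_nonsing_inv M (isUnit_iff_ne_zero.2 hMdet)
  -- K is invertible
  have hKdet : K.det ≠ 0 := by
    intro hdet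
    obtain ⟨v, hv0, hv⟩ := (Matrix.exists_mulVec_eq_zero_iff).2 hdet
    have h1 : ∀ i, 0 ≤ (M *ᵥ fun j => -‖v j‖) i := by
      intro i
      have h2 := row_ineq M K hdiag hoff v i
      rw [hv] at h2
      simp only [Pi.zero_apply, norm_zero] at h2
      have : (M *ᵥ fun j => -‖v j‖) i = -((M *ᵥ fun j => ‖v j‖) i) := by
        simp only [Matrix.mulVec, dotProduct]
        rw [← Finset.sum_neg_distrib]
        exact Finset.sum_congr rfl fun j _ => by ring
      rw [this]
      linarith
    have h2 := mmatrix_mono M hZ u hu hMu _ h1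
    apply hv0
    funext i
    have h3 := h2 i
    have h4 : ‖v i‖ ≤ 0 := by linarith
    have h5 : ‖v i‖ = 0 := le_antisymm h4 (norm_nonneg _)
    simpa using h5
  refine ⟨isUnit_iff_ne_zero.2 hKdet, fun p q => ?_⟩
  have hKK : K * K⁻¹ = 1 := Matrix.mul_nonsing_inv K (isUnit_iff_ne_zero.2 hKdet)
  set x : N → ℂ := K⁻¹ *ᵥ Pi.single q 1 with hx
  have hKx : K *ᵥ x = Pi.single q 1 := by
    rw [hx, Matrix.mulVec_mulVec, hKK, Matrix.one_mulVec]
  set y : N → ℝ := M⁻¹ *ᵥ Pi.single q 1 with hy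
  have hMy : M *ᵥ y = Pi.single q 1 := by
    rw [hy, Matrix.mulVec_mulVec, hMK, Matrix.one_mulVec]
  have habs : ∀ i, ‖(K *ᵥ x) i‖ = (Pi.single q 1 : N → ℝ) i := by
    intro i
    rw [hKx]
    rcases eq_or_ne i q with rfl | h
    · simp
    · simp [Pi.single_apply, h]
  have h1 : ∀ i, 0 ≤ (M *ᵥ (y - fun j => ‖x j‖)) i := by
    intro i
    rw [Matrix.mulVec_sub]
    have h2 := row_ineq M K hdiag hoff x i
    rw [habs i] at h2
    have h3 : (M *ᵥ y) i = (Pi.single q 1 : N → ℝ) i := by rw [hMy]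
    simp only [Pi.sub_apply]
    linarith
  have h2 := mmatrix_mono M hZ u hu hMu _ h1
  have h3 := h2 p
  simp only [Pi.sub_apply] at h3
  have hxp : ‖x p‖ = ‖K⁻¹ p q‖ := by
    rw [hx]
    congr 1
    simp [Matrix.mulVec_single]
  have hyp : y p = M⁻¹ p q := by
    rw [hy]
    simp [Matrix.mulVec_single]
  rw [hxp, hyp] at h3
  linarith

end Key

lemma wlin_le_abs (ω : ℝ) (hω : ω ∈ Set.Icc (0:ℝ) 1) (z : ℂ) : wlin ω z ≤ ‖z‖ := by
  obtain ⟨h0, h1⟩ := hω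
  have hre : z.re ≤ ‖z‖ := Complex.re_le_norm z
  have him : z.im ≤ ‖z‖ := Complex.im_le_norm z
  unfold wlin
  nlinarith


/-- If `Ã ≤ A_ω`, `D̃ ≤ D_ω` are Z-matrices and the Kronecker sum
`D̃ᵀ⊗I + I⊗Ã` is a nonsingular M-matrix, then `Dᵀ⊗I + I⊗A` is nonsingular and its inverse is
entrywise dominated by `(D̃ᵀ⊗I + I⊗Ã)⁻¹`. -/
theorem stmt2 {m n : ℕ} (ω : ℝ) (hω : ω ∈ Set.Icc (0 : ℝ) 1)
    (A : Matrix (Fin m) (Fin m) ℂ) (D : Matrix (Fin n) (Fin n) ℂ)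
    (At : Matrix (Fin m) (Fin m) ℝ) (Dt : Matrix (Fin n) (Fin n) ℝ)
    (hAZ : ∀ i j, i ≠ j → At i j ≤ 0) (hDZ : ∀ i j, i ≠ j → Dt i j ≤ 0)
    (hAle : ∀ i j, At i j ≤ omegaComp ω A i j)
    (hDle : ∀ i j, Dt i j ≤ omegaComp ω D i j)
    (hM : IsNonsingMMatrix
      (Dtᵀ ⊗ₖ (1 : Matrix (Fin m) (Fin m) ℝ) + (1 : Matrix (Fin n) (Fin n) ℝ) ⊗ₖ At)) :
    IsUnit (Dᵀ ⊗ₖ (1 : Matrix (Fin m) (Fin m) ℂ) +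
        (1 : Matrix (Fin n) (Fin n) ℂ) ⊗ₖ A).det ∧
    ∀ p q, ‖(Dᵀ ⊗ₖ (1 : Matrix (Fin m) (Fin m) ℂ) +
        (1 : Matrix (Fin n) (Fin n) ℂ) ⊗ₖ A)⁻¹ p q‖ ≤
      (Dtᵀ ⊗ₖ (1 : Matrix (Fin m) (Fin m) ℝ) +
        (1 : Matrix (Fin n) (Fin n) ℝ) ⊗ₖ At)⁻¹ p q := by
  obtain ⟨hZ, u, hu, hMu⟩ := hM
  set M := Dtᵀ ⊗ₖ (1 : Matrix (Fin m) (Fin m) ℝ) + (1 : Matrix (Fin n) (Fin n) ℝ) ⊗ₖ At with hMdef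
  set K := Dᵀ ⊗ₖ (1 : Matrix (Fin m) (Fin m) ℂ) + (1 : Matrix (Fin n) (Fin n) ℂ) ⊗ₖ A with hKdef
  have hMapp : ∀ p q : Fin n × Fin m,
      M p q = Dt q.1 p.1 * (if p.2 = q.2 then (1:ℝ) else 0)
        + (if p.1 = q.1 then (1:ℝ) else 0) * At p.2 q.2 := by
    intro p q
    simp [hMdef, Matrix.add_apply, Matrix.kroneckerMap_apply, Matrix.one_apply,
      Matrix.transpose_apply]
  have hKapp : ∀ p q : Fin n × Fin m,
      K p q = D q.1 p.1 * (if p.2 = q.2 then (1:ℂ) else 0)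
        + (if p.1 = q.1 then (1:ℂ) else 0) * A p.2 q.2 := by
    intro p q
    simp [hKdef, Matrix.add_apply, Matrix.kroneckerMap_apply, Matrix.one_apply,
      Matrix.transpose_apply]
  have hdiag : ∀ p, M p p ≤ ‖K p p‖ := by
    intro p
    rw [hMapp, hKapp]
    simp only [if_pos rfl, if_true, eq_self_iff_true, mul_one, one_mul]
    have h1 : Dt p.1 p.1 ≤ wlin ω (D p.1 p.1) := by
      have := hDle p.1 p.1
      simpa [omegaComp] using this
    have h2 : At p.2 p.2 ≤ wlin ω (A p.2 p.2) := by
      have := hAle p.2 p.2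
      simpa [omegaComp] using this
    have h3 : wlin ω (D p.1 p.1) + wlin ω (A p.2 p.2) = wlin ω (D p.1 p.1 + A p.2 p.2) := by
      simp [wlin]; ring
    have h4 := wlin_le_abs ω hω (D p.1 p.1 + A p.2 p.2)
    linarith
  have hoff : ∀ p q, p ≠ q → M p q ≤ -‖K p q‖ := by
    intro p q hpq
    rw [hMapp, hKapp]
    rcases eq_or_ne p.1 q.1 with h1 | h1
    · rcases eq_or_ne p.2 q.2 with h2 | h2
      · exact absurd (Prod.ext h1 h2) hpq
      · simp only [if_pos h1, if_neg h2, mul_zero, one_mul, zero_add]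
        have := hAle p.2 q.2
        simpa [omegaComp, h2] using this
    · rcases eq_or_ne p.2 q.2 with h2 | h2
      · simp only [if_neg h1, if_pos h2, mul_one, zero_mul, add_zero]
        have := hDle q.1 p.1
        have hne : q.1 ≠ p.1 := Ne.symm h1
        simpa [omegaComp, hne] using this
      · simp [if_neg h1, if_neg h2]
  exact key_lemma M K hZ u hu hMu hdiag hoff
end
end

section
/- Under the hypotheses of the previous setting (ω ∈ [0,1]; Q = [[D, −C], [−B, A]] with Q_ω a nonsingular M-matrix and Q_ω·1 > 0; Q̃ = [[D̃, −C̃], [−B̃, Ã]] a real nonsingular M-matrix with Q̃ ≤ Q_ω, Q̃·1 > 0; Φ̃ the minimal nonnegative solution of XC̃X − XD̃ − ÃX + B̃ = 0), let Φ be the unique solution of XCX − XD − AX + B = 0 with |Φ| ≤ Φ̃. Then D − CΦ is nonsingular, every eigenvalue λ of D − CΦ satisfies ω·Re(λ) + (1−ω)·Im(λ) > 0, and Φ is the unique solution of the NARE with this spectral property, i.e., if X solves XCX − XD − AX + B = 0 and every eigenvalue λ of D − CX satisfies ω·Re(λ) + (1−ω)·Im(λ) > 0, then X = Φ. -/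
open Matrix Filter Kronecker
open Topology Polynomial

noncomputable section

section helpers

lemma wlin_add (ω : ℝ) (z w : ℂ) : wlin ω (z + w) = wlin ω z + wlin ω w := by
  simp [wlin]; ring

@[simp] lemma wlin_zero (ω : ℝ) : wlin ω 0 = 0 := by simp [wlin]

lemma abs_wlin_le {ω : ℝ} (h0 : 0 ≤ ω) (h1 : ω ≤ 1) (z : ℂ) : |wlin ω z| ≤ ‖z‖ := by
  have h2 : |z.re| ≤ ‖z‖ := Complex.abs_re_le_norm z
  have h3 : |z.im| ≤ ‖z‖ := Complex.abs_im_le_norm z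
  calc |wlin ω z| ≤ ω * |z.re| + (1 - ω) * |z.im| := by
        refine (abs_add_le _ _).trans ?_
        gcongr
        · rw [abs_mul, abs_of_nonneg h0]
        · rw [abs_mul, abs_of_nonneg (by linarith)]
    _ ≤ ω * ‖z‖ + (1 - ω) * ‖z‖ := by gcongr <;> linarith
    _ = ‖z‖ := by ring

lemma mulVec_expand {a b : Type*} [Fintype b] (M : Matrix a b ℝ) (v : b → ℝ) (i : a) :
    (M *ᵥ v) i = ∑ j, M i j * v j := rfl

lemma matmul_nonneg {a b c : Type*} [Fintype b] {M : Matrix a b ℝ} {N : Matrix b c ℝ}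
    (hM : ∀ i j, 0 ≤ M i j) (hN : ∀ i j, 0 ≤ N i j) : ∀ i j, 0 ≤ (M * N) i j := by
  intro i j
  rw [Matrix.mul_apply]
  exact Finset.sum_nonneg fun k _ => mul_nonneg (hM i k) (hN k j)

lemma matmul_mono {a b c : Type*} [Fintype b] {M M' : Matrix a b ℝ} {N N' : Matrix b c ℝ}
    (hM : ∀ i j, 0 ≤ M i j) (hMM : ∀ i j, M i j ≤ M' i j)
    (hN : ∀ i j, 0 ≤ N i j) (hNN : ∀ i j, N i j ≤ N' i j) :
    ∀ i j, (M * N) i j ≤ (M' * N') i j := by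
  intro i j
  rw [Matrix.mul_apply, Matrix.mul_apply]
  refine Finset.sum_le_sum fun k _ => ?_
  exact mul_le_mul (hMM i k) (hNN k j) (hN k j) ((hM i k).trans (hMM i k))

lemma mulVec_mono_right {a b : Type*} [Fintype b] {M : Matrix a b ℝ} {v w : b → ℝ}
    (hM : ∀ i j, 0 ≤ M i j) (h : ∀ j, v j ≤ w j) : ∀ i, (M *ᵥ v) i ≤ (M *ᵥ w) i := by
  intro i
  rw [mulVec_expand, mulVec_expand]
  exact Finset.sum_le_sum fun j _ => mul_le_mul_of_nonneg_left (h j) (hM i j)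

lemma mulVec_mono_left {a b : Type*} [Fintype b] {M M' : Matrix a b ℝ} {v : b → ℝ}
    (h : ∀ i j, M i j ≤ M' i j) (hv : ∀ j, 0 ≤ v j) : ∀ i, (M *ᵥ v) i ≤ (M' *ᵥ v) i := by
  intro i
  rw [mulVec_expand, mulVec_expand]
  exact Finset.sum_le_sum fun j _ => mul_le_mul_of_nonneg_right (h i j) (hv j)

lemma mulVec_nonneg' {a b : Type*} [Fintype b] {M : Matrix a b ℝ} {v : b → ℝ}
    (hM : ∀ i j, 0 ≤ M i j) (hv : ∀ j, 0 ≤ v j) : ∀ i, 0 ≤ (M *ᵥ v) i := by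
  intro i
  rw [mulVec_expand]
  exact Finset.sum_nonneg fun j _ => mul_nonneg (hM i j) (hv j)

lemma abs_matmul_le {a b c : Type*} [Fintype b] {M : Matrix a b ℂ} {N : Matrix b c ℂ}
    {Mt : Matrix a b ℝ} {Nt : Matrix b c ℝ}
    (hM : ∀ i j, ‖M i j‖ ≤ Mt i j) (hN : ∀ i j, ‖N i j‖ ≤ Nt i j) :
    ∀ i j, ‖(M * N) i j‖ ≤ (Mt * Nt) i j := by
  intro i j
  rw [Matrix.mul_apply, Matrix.mul_apply]
  calc ‖∑ k, M i k * N k j‖ ≤ ∑ k, ‖M i k * N k j‖ :=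
        norm_sum_le _ _
    _ ≤ ∑ k, Mt i k * Nt k j := by
        refine Finset.sum_le_sum fun k _ => ?_
        rw [norm_mul]
        exact mul_le_mul (hM i k) (hN k j) (norm_nonneg _)
          ((norm_nonneg _).trans (hM i k))

end helpers
/-- Key eigenvalue localization lemma. -/
lemma spec_wlin_pos {k : ℕ} {ω : ℝ} (h0 : 0 ≤ ω) (h1 : ω ≤ 1)
    (M : Matrix (Fin k) (Fin k) ℂ) (u : Fin k → ℝ) (hu : ∀ i, 0 < u i)
    (h : ∀ i, 0 < (omegaComp ω M *ᵥ u) i) :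
    ∀ μ ∈ spectrum ℂ M, 0 < wlin ω μ := by
  intro μ hμ
  rw [spectrum.mem_iff] at hμ
  rw [Matrix.isUnit_iff_isUnit_det, isUnit_iff_ne_zero, not_not] at hμ
  obtain ⟨v, hv0, hv⟩ := (Matrix.exists_mulVec_eq_zero_iff).mpr hμ
  rw [Matrix.sub_mulVec, Algebra.algebraMap_eq_smul_one, smul_mulVec, one_mulVec,
    sub_eq_zero] at hv
  -- hv : μ • v = M *ᵥ v
  obtain ⟨i, _, hi⟩ := Finset.exists_max_image Finset.univ
    (fun j => ‖v j‖ / u j) (Finset.univ_nonempty_iff.mpr (by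
      rcases Function.ne_iff.mp hv0 with ⟨j, _⟩; exact ⟨j⟩))
  have hvi : 0 < ‖v i‖ := by
    rcases Function.ne_iff.mp hv0 with ⟨j, hj⟩
    have hj' : 0 < ‖v j‖ / u j :=
      div_pos (by simpa [norm_pos_iff] using hj) (hu j)
    have := hi j (Finset.mem_univ j)
    have hui := hu i
    by_contra hcon
    push_neg at hcon
    have : ‖v i‖ = 0 := le_antisymm hcon (norm_nonneg _)
    rw [this] at hi
    have := hi j (Finset.mem_univ j)
    simp only [zero_div] at this
    linarith
  have hvj : ∀ j, ‖v j‖ ≤ u j * (‖v i‖ / u i) := by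
    intro j
    have := hi j (Finset.mem_univ j)
    have huj := hu j
    calc ‖v j‖ = (‖v j‖ / u j) * u j := by field_simp
      _ ≤ (‖v i‖ / u i) * u j := by gcongr
      _ = u j * (‖v i‖ / u i) := by ring
  -- row i of eigen equation
  have hrow : (μ - M i i) * v i = ∑ j ∈ Finset.univ.erase i, M i j * v j := by
    have := congrFun hv i
    have hMv : (M *ᵥ v) i = ∑ j, M i j * v j := rfl
    have hsplit : ∑ j, M i j * v j = M i i * v i + ∑ j ∈ Finset.univ.erase i, M i j * v j :=
      (Finset.add_sum_erase _ _ (Finset.mem_univ i)).symm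
    have hμv : (μ • v) i = μ * v i := rfl
    rw [hMv, hsplit] at this
    rw [hμv] at this
    ring_nf
    ring_nf at this ⊢
    linear_combination this
  have habs : ‖μ - M i i‖ * ‖v i‖
      ≤ (∑ j ∈ Finset.univ.erase i, ‖M i j‖ * u j) * (‖v i‖ / u i) := by
    rw [show ‖μ - M i i‖ * ‖v i‖ = ‖(μ - M i i) * v i‖
      from (norm_mul _ _).symm, hrow]
    calc ‖∑ j ∈ Finset.univ.erase i, M i j * v j‖
        ≤ ∑ j ∈ Finset.univ.erase i, ‖M i j * v j‖ :=
          norm_sum_le _ _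
      _ ≤ ∑ j ∈ Finset.univ.erase i, ‖M i j‖ * (u j * (‖v i‖ / u i)) := by
          refine Finset.sum_le_sum fun j _ => ?_
          rw [norm_mul]
          exact mul_le_mul_of_nonneg_left (hvj j) (norm_nonneg _)
      _ = (∑ j ∈ Finset.univ.erase i, ‖M i j‖ * u j) * (‖v i‖ / u i) := by
          rw [Finset.sum_mul]; congr 1; ext j; ring
  have hcomp : ∑ j ∈ Finset.univ.erase i, ‖M i j‖ * u j < wlin ω (M i i) * u i := by
    have := h i
    rw [mulVec_expand] at this
    have hsplit : ∑ j, omegaComp ω M i j * u j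
        = omegaComp ω M i i * u i + ∑ j ∈ Finset.univ.erase i, omegaComp ω M i j * u j :=
      (Finset.add_sum_erase _ _ (Finset.mem_univ i)).symm
    rw [hsplit] at this
    have h1 : omegaComp ω M i i = wlin ω (M i i) := by simp [omegaComp]
    have h2 : ∑ j ∈ Finset.univ.erase i, omegaComp ω M i j * u j
        = -∑ j ∈ Finset.univ.erase i, ‖M i j‖ * u j := by
      rw [← Finset.sum_neg_distrib]
      refine Finset.sum_congr rfl fun j hj => ?_
      have : i ≠ j := fun hij => (Finset.mem_erase.mp hj).1 hij.symm
      simp [omegaComp, this, neg_mul]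
    rw [h1, h2] at this
    linarith
  have hlt : ‖μ - M i i‖ < wlin ω (M i i) := by
    have hui := hu i
    have := habs.trans_lt (by
      have : 0 < ‖v i‖ / u i := div_pos hvi hui
      calc (∑ j ∈ Finset.univ.erase i, ‖M i j‖ * u j) * (‖v i‖ / u i)
          < (wlin ω (M i i) * u i) * (‖v i‖ / u i) := by
            exact mul_lt_mul_of_pos_right hcomp this
        _ = wlin ω (M i i) * ‖v i‖ := by field_simp)
    exact lt_of_mul_lt_mul_right this (norm_nonneg _) |>.trans_le (le_of_eq rfl)
  have key : wlin ω μ = wlin ω (M i i) + wlin ω (μ - M i i) := by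
    rw [← wlin_add]; congr 1; ring
  have := (abs_le.mp (abs_wlin_le h0 h1 (μ - M i i))).1
  linarith
lemma pow_intertwine {p q : ℕ} (M : Matrix (Fin p) (Fin p) ℂ) (N : Matrix (Fin q) (Fin q) ℂ)
    (Y : Matrix (Fin p) (Fin q) ℂ) (hY : M * Y = Y * N) :
    ∀ k : ℕ, M ^ k * Y = Y * N ^ k := by
  intro k
  induction k with
  | zero => simp
  | succ k ih =>
    rw [pow_succ, pow_succ, Matrix.mul_assoc, hY, ← Matrix.mul_assoc, ih, Matrix.mul_assoc]

lemma aeval_intertwine {p q : ℕ} (M : Matrix (Fin p) (Fin p) ℂ) (N : Matrix (Fin q) (Fin q) ℂ)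
    (Y : Matrix (Fin p) (Fin q) ℂ) (hY : M * Y = Y * N) (pl : ℂ[X]) :
    (aeval M pl) * Y = Y * (aeval N pl) := by
  induction pl using Polynomial.induction_on' with
  | add f g hf hg => rw [map_add, map_add, Matrix.add_mul, Matrix.mul_add, hf, hg]
  | monomial k a =>
    rw [aeval_monomial, aeval_monomial, ← Algebra.smul_def, ← Algebra.smul_def,
      Matrix.smul_mul, Matrix.mul_smul, pow_intertwine M N Y hY k]

lemma eval_charpoly' {p : ℕ} (M : Matrix (Fin p) (Fin p) ℂ) (t : ℂ) :
    (Matrix.charpoly M).eval t = (algebraMap ℂ (Matrix (Fin p) (Fin p) ℂ) t - M).det := by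
  rw [Matrix.charpoly, eval_det, matPolyEquiv_charmatrix]
  simp only [eval_sub, eval_C, eval_X, Algebra.algebraMap_eq_smul_one, map_sub]
  congr 2
  rw [smul_eq_diagonal_mul, Matrix.mul_one]
  rfl

lemma root_charpoly_mem_spectrum {p : ℕ} (M : Matrix (Fin p) (Fin p) ℂ) (t : ℂ)
    (h : (Matrix.charpoly M).eval t = 0) : t ∈ spectrum ℂ M := by
  rw [spectrum.mem_iff, Matrix.isUnit_iff_isUnit_det, isUnit_iff_ne_zero, not_not]
  rw [eval_charpoly'] at h
  exact h

lemma sylvester_unique {p q : ℕ} (M : Matrix (Fin p) (Fin p) ℂ) (N : Matrix (Fin q) (Fin q) ℂ)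
    (h : ∀ μ ∈ spectrum ℂ M, ∀ ν ∈ spectrum ℂ N, μ + ν ≠ 0)
    (Y : Matrix (Fin p) (Fin q) ℂ) (hY : M * Y + Y * N = 0) : Y = 0 := by
  have hY' : M * Y = Y * (-N) := by
    rw [Matrix.mul_neg]
    exact eq_neg_of_add_eq_zero_left hY
  have hzero : Y * aeval (-N) (Matrix.charpoly M) = 0 := by
    rw [← aeval_intertwine M (-N) Y hY', Matrix.aeval_self_charpoly, Matrix.zero_mul]
  have hunit : IsUnit (aeval (-N) (Matrix.charpoly M)) := by
    by_contra hcon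
    obtain ⟨k, hk, hroot⟩ := spectrum.exists_mem_of_not_isUnit_aeval_prod
      (p := Matrix.charpoly M) (a := -N) (by
        rw [← (IsAlgClosed.splits (Matrix.charpoly M)).eq_prod_roots_of_monic
          (Matrix.charpoly_monic M)]
        exact hcon)
    have hkM : k ∈ spectrum ℂ M := root_charpoly_mem_spectrum M k hroot
    have hkN : -k ∈ spectrum ℂ N := by
      rw [spectrum.mem_iff] at hk ⊢
      intro hu
      apply hk
      have : algebraMap ℂ (Matrix (Fin q) (Fin q) ℂ) k - (-N)
          = -(algebraMap ℂ (Matrix (Fin q) (Fin q) ℂ) (-k) - N) := by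
        rw [map_neg]; module
      rw [this]
      exact hu.neg
    exact h k hkM (-k) hkN (add_neg_cancel k)
  obtain ⟨uu, huu⟩ := hunit
  calc Y = Y * (aeval (-N) (Matrix.charpoly M)) * (↑uu⁻¹ : Matrix (Fin q) (Fin q) ℂ) := by
        rw [← huu, Matrix.mul_assoc, Units.mul_inv, Matrix.mul_one]
    _ = 0 := by rw [hzero, Matrix.zero_mul]
lemma exists_bounded_sol {m n : ℕ}
    (At : Matrix (Fin m) (Fin m) ℝ) (Bt : Matrix (Fin m) (Fin n) ℝ)
    (Ct : Matrix (Fin n) (Fin m) ℝ) (Dt : Matrix (Fin n) (Fin n) ℝ)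
    (hAoff : ∀ i j, i ≠ j → At i j ≤ 0)
    (hDoff : ∀ i j, i ≠ j → Dt i j ≤ 0)
    (hB : ∀ i j, 0 ≤ Bt i j) (hC : ∀ i j, 0 ≤ Ct i j)
    (hA1 : ∀ i, (Bt *ᵥ 1) i ≤ (At *ᵥ 1) i)
    (hD1 : ∀ i, (Ct *ᵥ 1) i ≤ (Dt *ᵥ 1) i) :
    ∃ Z : Matrix (Fin m) (Fin n) ℝ, (∀ i j, 0 ≤ Z i j) ∧
      Z * Ct * Z - Z * Dt - At * Z + Bt = 0 ∧ ∀ i, (Z *ᵥ 1) i ≤ 1 := by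
  set θ : ℝ := 1 + (∑ i, |At i i|) + (∑ j, |Dt j j|) with hθ
  have hsumA : 0 ≤ ∑ i, |At i i| := Finset.sum_nonneg fun i _ => abs_nonneg _
  have hsumD : 0 ≤ ∑ j, |Dt j j| := Finset.sum_nonneg fun j _ => abs_nonneg _
  have hθpos : 0 < θ := by rw [hθ]; linarith
  have hθA : ∀ i, At i i ≤ θ := by
    intro i
    have h1 : |At i i| ≤ ∑ i', |At i' i'| :=
      Finset.single_le_sum (fun i' _ => abs_nonneg (At i' i')) (Finset.mem_univ i)
    have := le_abs_self (At i i)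
    rw [hθ]; linarith
  have hθD : ∀ j, Dt j j ≤ θ := by
    intro j
    have h1 : |Dt j j| ≤ ∑ j', |Dt j' j'| :=
      Finset.single_le_sum (fun j' _ => abs_nonneg (Dt j' j')) (Finset.mem_univ j)
    have := le_abs_self (Dt j j)
    rw [hθ]; linarith
  set N1 : Matrix (Fin m) (Fin m) ℝ := θ • 1 - At with hN1def
  set N2 : Matrix (Fin n) (Fin n) ℝ := θ • 1 - Dt with hN2def
  have hN1 : ∀ i j, 0 ≤ N1 i j := by
    intro i j
    rw [hN1def]
    by_cases hij : i = j
    · subst hij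
      simp only [Matrix.sub_apply, Matrix.smul_apply, Matrix.one_apply_eq, smul_eq_mul, mul_one]
      linarith [hθA i]
    · simp only [Matrix.sub_apply, Matrix.smul_apply, Matrix.one_apply_ne hij, smul_eq_mul,
        mul_zero, zero_sub, neg_nonneg]
      exact hAoff i j hij
  have hN2 : ∀ i j, 0 ≤ N2 i j := by
    intro i j
    rw [hN2def]
    by_cases hij : i = j
    · subst hij
      simp only [Matrix.sub_apply, Matrix.smul_apply, Matrix.one_apply_eq, smul_eq_mul, mul_one]
      linarith [hθD i]
    · simp only [Matrix.sub_apply, Matrix.smul_apply, Matrix.one_apply_ne hij, smul_eq_mul,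
        mul_zero, zero_sub, neg_nonneg]
      exact hDoff i j hij
  set F : Matrix (Fin m) (Fin n) ℝ → Matrix (Fin m) (Fin n) ℝ :=
    fun X => (2 * θ)⁻¹ • (X * Ct * X + N1 * X + X * N2 + Bt) with hFdef
  have hinv : (0:ℝ) < (2 * θ)⁻¹ := by positivity
  -- F preserves nonnegativity
  have hFpos : ∀ X, (∀ i j, 0 ≤ X i j) → ∀ i j, 0 ≤ F X i j := by
    intro X hX i j
    rw [hFdef]
    simp only [Matrix.smul_apply, Matrix.add_apply, smul_eq_mul]
    have h1 := matmul_nonneg (matmul_nonneg hX hC) hX i j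
    have h2 := matmul_nonneg hN1 hX i j
    have h3 := matmul_nonneg hX hN2 i j
    have := hB i j
    positivity
  -- F preserves the row-sum bound
  have hFrow : ∀ X, (∀ i j, 0 ≤ X i j) → (∀ i, (X *ᵥ 1) i ≤ 1) →
      ∀ i, (F X *ᵥ 1) i ≤ 1 := by
    intro X hX hXrow i
    have hexp : (F X *ᵥ 1) = (2 * θ)⁻¹ •
        ((X *ᵥ (Ct *ᵥ (X *ᵥ 1))) + (N1 *ᵥ (X *ᵥ 1)) + (X *ᵥ (N2 *ᵥ 1)) + Bt *ᵥ 1) := by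
      rw [hFdef]
      simp only [smul_mulVec, Matrix.add_mulVec]
      simp only [← Matrix.mulVec_mulVec]
    rw [hexp]
    simp only [Pi.smul_apply, Pi.add_apply, smul_eq_mul]
    -- combine term 1 and 3
    have ht13 : (X *ᵥ (Ct *ᵥ (X *ᵥ 1))) i + (X *ᵥ (N2 *ᵥ 1)) i ≤ θ := by
      have hC1 : ∀ j, (Ct *ᵥ (X *ᵥ 1)) j ≤ (Ct *ᵥ 1) j :=
        mulVec_mono_right hC (fun j => hXrow j)
      have step1 : (X *ᵥ (Ct *ᵥ (X *ᵥ 1))) i ≤ (X *ᵥ (Ct *ᵥ 1)) i :=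
        mulVec_mono_right hX hC1 i
      have hsum : ∀ j, (Ct *ᵥ 1) j + (N2 *ᵥ 1) j ≤ θ := by
        intro j
        have : (N2 *ᵥ 1) j = θ - (Dt *ᵥ 1) j := by
          rw [hN2def, Matrix.sub_mulVec, smul_mulVec, Matrix.one_mulVec]
          simp
        rw [this]
        have := hD1 j
        linarith
      have comb : (X *ᵥ (Ct *ᵥ 1)) i + (X *ᵥ (N2 *ᵥ 1)) i = (X *ᵥ fun j => (Ct *ᵥ 1) j + (N2 *ᵥ 1) j) i := by
        rw [show (fun j => (Ct *ᵥ 1) j + (N2 *ᵥ 1) j) = (Ct *ᵥ 1) + (N2 *ᵥ 1) from rfl,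
          Matrix.mulVec_add]
        simp
      have last : (X *ᵥ fun j => (Ct *ᵥ 1) j + (N2 *ᵥ 1) j) i ≤ (X *ᵥ fun _ => θ) i :=
        mulVec_mono_right hX hsum i
      have final : (X *ᵥ fun _ => θ) i ≤ θ := by
        have : (X *ᵥ fun _ => θ) i = θ * (X *ᵥ 1) i := by
          simp [Matrix.mulVec, dotProduct, Finset.mul_sum]
          congr 1; ext j; ring
        rw [this]
        have := hXrow i
        nlinarith [hθpos]
      have step3 := mulVec_mono_right hX (fun j => le_refl ((N2 *ᵥ 1) j)) i
      linarith [step1, comb ▸ last, final]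
    have ht24 : (N1 *ᵥ (X *ᵥ 1)) i + (Bt *ᵥ 1) i ≤ θ := by
      have step2 : (N1 *ᵥ (X *ᵥ 1)) i ≤ (N1 *ᵥ 1) i :=
        mulVec_mono_right hN1 (fun j => hXrow j) i
      have : (N1 *ᵥ 1) i = θ - (At *ᵥ 1) i := by
        rw [hN1def, Matrix.sub_mulVec, smul_mulVec, Matrix.one_mulVec]
        simp
      have := hA1 i
      linarith
    have hb : (X *ᵥ (Ct *ᵥ (X *ᵥ 1))) i + (N1 *ᵥ (X *ᵥ 1)) i + (X *ᵥ (N2 *ᵥ 1)) i + (Bt *ᵥ 1) i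
        ≤ 2 * θ := by linarith
    calc (2*θ)⁻¹ * ((X *ᵥ (Ct *ᵥ (X *ᵥ 1))) i + (N1 *ᵥ (X *ᵥ 1)) i + (X *ᵥ (N2 *ᵥ 1)) i + (Bt *ᵥ 1) i)
        ≤ (2*θ)⁻¹ * (2*θ) := by
          apply mul_le_mul_of_nonneg_left hb (le_of_lt hinv)
      _ = 1 := by field_simp
  -- F is monotone
  have hFmono : ∀ X X', (∀ i j, 0 ≤ X i j) → (∀ i j, X i j ≤ X' i j) →
      ∀ i j, F X i j ≤ F X' i j := by
    intro X X' hX hXX i j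
    rw [hFdef]
    simp only [Matrix.smul_apply, Matrix.add_apply, smul_eq_mul]
    apply mul_le_mul_of_nonneg_left _ (le_of_lt hinv)
    have hX' : ∀ i j, 0 ≤ X' i j := fun i j => (hX i j).trans (hXX i j)
    have h1 := matmul_mono (matmul_nonneg hX hC) (matmul_mono hX hXX hC (fun i j => le_refl _))
      hX hXX i j
    have h2 := matmul_mono hN1 (fun i j => le_refl _) hX hXX i j
    have h3 := matmul_mono hX hXX hN2 (fun i j => le_refl _) i j
    linarith
  -- iterate F from 0
  set seq : ℕ → Matrix (Fin m) (Fin n) ℝ := fun k => F^[k] 0 with hseqdef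
  have hseq0 : seq 0 = 0 := rfl
  have hseq_succ : ∀ k, seq (k+1) = F (seq k) := fun k => Function.iterate_succ_apply' F k 0
  have hInv : ∀ k, (∀ i j, 0 ≤ seq k i j) ∧ (∀ i, (seq k *ᵥ 1) i ≤ 1) := by
    intro k
    induction k with
    | zero =>
      refine ⟨fun i j => by rw [hseq0]; exact le_refl 0, fun i => ?_⟩
      rw [hseq0, Matrix.zero_mulVec]
      exact zero_le_one
    | succ k ih =>
      rw [hseq_succ]
      exact ⟨hFpos _ ih.1, hFrow _ ih.1 ih.2⟩
  have hmono : ∀ k, ∀ i j, seq k i j ≤ seq (k+1) i j := by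
    intro k
    induction k with
    | zero =>
      intro i j
      rw [hseq_succ, hseq0]
      exact hFpos 0 (fun i j => le_refl 0) i j
    | succ k ih =>
      intro i j
      have ih' : ∀ i j, seq k i j ≤ F (seq k) i j := by
        intro i j
        rw [← hseq_succ k]
        exact ih i j
      rw [hseq_succ (k+1), hseq_succ k]
      exact hFmono _ _ (hInv k).1 ih' i j
  have hub : ∀ k i j, seq k i j ≤ 1 := by
    intro k i j
    have h1 : seq k i j ≤ ∑ j', seq k i j' :=
      Finset.single_le_sum (fun j' _ => (hInv k).1 i j') (Finset.mem_univ j)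
    have h2 : ∑ j', seq k i j' = (seq k *ᵥ 1) i := by
      rw [mulVec_expand]
      simp
    exact h1.trans (h2 ▸ (hInv k).2 i)
  set Z : Matrix (Fin m) (Fin n) ℝ := Matrix.of (fun i j => ⨆ k, seq k i j) with hZdef
  have hmono' : ∀ i j, Monotone fun k => seq k i j :=
    fun i j => monotone_nat_of_le_succ (fun k => hmono k i j)
  have hbdd : ∀ i j, BddAbove (Set.range fun k => seq k i j) := by
    intro i j
    refine ⟨1, ?_⟩
    rintro x ⟨k, rfl⟩
    exact hub k i j
  have htend : ∀ i j, Tendsto (fun k => seq k i j) atTop (𝓝 (Z i j)) :=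
    fun i j => tendsto_atTop_ciSup (hmono' i j) (hbdd i j)
  have htendM : Tendsto seq atTop (𝓝 Z) := by
    refine tendsto_pi_nhds.mpr ?_
    intro i
    rw [tendsto_pi_nhds]
    intro j
    exact htend i j
  have hFcont : Continuous F := by
    rw [hFdef]
    fun_prop
  have hZfix : F Z = Z := by
    have h1 : Tendsto (fun k => F (seq k)) atTop (𝓝 (F Z)) := (hFcont.tendsto Z).comp htendM
    have h2 : Tendsto (fun k => seq (k+1)) atTop (𝓝 Z) :=
      htendM.comp (tendsto_add_atTop_nat 1)
    have h3 : (fun k => seq (k+1)) = fun k => F (seq k) := funext hseq_succ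
    rw [h3] at h2
    exact tendsto_nhds_unique h1 h2
  have hZpos : ∀ i j, 0 ≤ Z i j := by
    intro i j
    have := le_ciSup (hbdd i j) 0
    rw [hseq0] at this
    exact le_trans (le_refl 0) this
  have hZrow : ∀ i, (Z *ᵥ 1) i ≤ 1 := by
    intro i
    rw [mulVec_expand]
    have hts : Tendsto (fun k => ∑ j, seq k i j * 1) atTop (𝓝 (∑ j, Z i j * 1)) :=
      tendsto_finset_sum _ (fun j _ => ((htend i j).mul_const 1))
    refine le_of_tendsto hts ?_
    filter_upwards with k
    have := (hInv k).2 i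
    rw [mulVec_expand] at this
    simpa using this
  have hZeq : Z * Ct * Z - Z * Dt - At * Z + Bt = 0 := by
    have h2θ : (2*θ : ℝ) ≠ 0 := by positivity
    have hW : Z * Ct * Z + N1 * Z + Z * N2 + Bt = (2*θ) • Z := by
      have := congrArg (fun W => (2*θ : ℝ) • W) hZfix
      simp only [hFdef] at this
      rw [smul_smul, mul_inv_cancel₀ h2θ, one_smul] at this
      exact this
    have e1 : N1 * Z = θ • Z - At * Z := by
      rw [hN1def, Matrix.sub_mul, Matrix.smul_mul, Matrix.one_mul]
    have e2 : Z * N2 = θ • Z - Z * Dt := by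
      rw [hN2def, Matrix.mul_sub, Matrix.mul_smul, Matrix.mul_one]
    rw [e1, e2] at hW
    have : Z * Ct * Z - Z * Dt - At * Z + Bt =
        (Z * Ct * Z + (θ • Z - At * Z) + (θ • Z - Z * Dt) + Bt) - (2*θ) • Z := by
      module
    rw [this, hW, sub_self]
  exact ⟨Z, hZpos, hZeq, hZrow⟩
/-- The solution `Φ` with `|Φ| ≤ Φ̃` is extremal: `D − CΦ` is nonsingular, its
spectrum lies strictly on the upper-right side of the line `ω·Re + (1−ω)·Im = 0`, and `Φ` is the
unique solution of the NARE with this spectral property. -/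
theorem stmt4 {m n : ℕ} (ω : ℝ) (hω : ω ∈ Set.Icc (0 : ℝ) 1)
    (A : Matrix (Fin m) (Fin m) ℂ) (B : Matrix (Fin m) (Fin n) ℂ)
    (C : Matrix (Fin n) (Fin m) ℂ) (D : Matrix (Fin n) (Fin n) ℂ)
    (At : Matrix (Fin m) (Fin m) ℝ) (Bt : Matrix (Fin m) (Fin n) ℝ)
    (Ct : Matrix (Fin n) (Fin m) ℝ) (Dt : Matrix (Fin n) (Fin n) ℝ)
    (hQ : IsNonsingMMatrix (omegaComp ω (Matrix.fromBlocks D (-C) (-B) A)))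
    (hQ1 : ∀ i, 0 < ((omegaComp ω (Matrix.fromBlocks D (-C) (-B) A)) *ᵥ 1) i)
    (hQt : IsNonsingMMatrix (Matrix.fromBlocks Dt (-Ct) (-Bt) At))
    (hQtle : ∀ i j, Matrix.fromBlocks Dt (-Ct) (-Bt) At i j ≤
      omegaComp ω (Matrix.fromBlocks D (-C) (-B) A) i j)
    (hQt1 : ∀ i, 0 < ((Matrix.fromBlocks Dt (-Ct) (-Bt) At) *ᵥ 1) i)
    (Φt : Matrix (Fin m) (Fin n) ℝ)
    (hΦtPos : ∀ i j, 0 ≤ Φt i j)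
    (hΦtSol : Φt * Ct * Φt - Φt * Dt - At * Φt + Bt = 0)
    (hΦtMin : ∀ Z : Matrix (Fin m) (Fin n) ℝ, (∀ i j, 0 ≤ Z i j) →
      Z * Ct * Z - Z * Dt - At * Z + Bt = 0 → ∀ i j, Φt i j ≤ Z i j)
    (Φ : Matrix (Fin m) (Fin n) ℂ)
    (hΦSol : Φ * C * Φ - Φ * D - A * Φ + B = 0)
    (hΦle : ∀ i j, ‖Φ i j‖ ≤ Φt i j) :
    IsUnit (D - C * Φ).det ∧
    (∀ μ ∈ spectrum ℂ (D - C * Φ), 0 < wlin ω μ) ∧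
    ∀ X : Matrix (Fin m) (Fin n) ℂ, X * C * X - X * D - A * X + B = 0 →
      (∀ μ ∈ spectrum ℂ (D - C * X), 0 < wlin ω μ) → X = Φ := by
  obtain ⟨hω0, hω1⟩ := hω
  -- off-diagonal signs from hQt
  have hAt_off : ∀ i j : Fin m, i ≠ j → At i j ≤ 0 := by
    intro i j hij
    have := hQt.1 (Sum.inr i) (Sum.inr j) (by simp [hij])
    simpa using this
  have hDt_off : ∀ i j : Fin n, i ≠ j → Dt i j ≤ 0 := by
    intro i j hij
    have := hQt.1 (Sum.inl i) (Sum.inl j) (by simp [hij])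
    simpa using this
  -- entrywise bounds from hQtle
  have habsB : ∀ i j, ‖B i j‖ ≤ Bt i j := by
    intro i j
    have := hQtle (Sum.inr i) (Sum.inl j)
    simp [omegaComp] at this
    linarith
  have habsC : ∀ i j, ‖C i j‖ ≤ Ct i j := by
    intro i j
    have := hQtle (Sum.inl i) (Sum.inr j)
    simp [omegaComp] at this
    linarith
  have hBt0 : ∀ i j, 0 ≤ Bt i j := fun i j => (norm_nonneg _).trans (habsB i j)
  have hCt0 : ∀ i j, 0 ≤ Ct i j := fun i j => (norm_nonneg _).trans (habsC i j)
  have hDt_diag : ∀ i, Dt i i ≤ wlin ω (D i i) := by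
    intro i
    have := hQtle (Sum.inl i) (Sum.inl i)
    simpa [omegaComp] using this
  have hAt_diag : ∀ i, At i i ≤ wlin ω (A i i) := by
    intro i
    have := hQtle (Sum.inr i) (Sum.inr i)
    simpa [omegaComp] using this
  have hDt_offle : ∀ i j, i ≠ j → Dt i j ≤ -‖D i j‖ := by
    intro i j hij
    have := hQtle (Sum.inl i) (Sum.inl j)
    simpa [omegaComp, hij] using this
  have hAt_offle : ∀ i j, i ≠ j → At i j ≤ -‖A i j‖ := by
    intro i j hij
    have := hQtle (Sum.inr i) (Sum.inr j)
    simpa [omegaComp, hij] using this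
  -- strict row-sum dominance from hQt1
  have hD1 : ∀ i, (Ct *ᵥ 1) i < (Dt *ᵥ 1) i := by
    intro i
    have := hQt1 (Sum.inl i)
    rw [mulVec_expand] at this
    rw [Fintype.sum_sum_type] at this
    simp only [Matrix.fromBlocks_apply₁₁, Matrix.fromBlocks_apply₁₂, Matrix.neg_apply,
      Pi.one_apply, mul_one, Finset.sum_neg_distrib] at this
    rw [mulVec_expand, mulVec_expand]
    simp only [Pi.one_apply, mul_one]
    linarith [this]
  have hA1 : ∀ i, (Bt *ᵥ 1) i < (At *ᵥ 1) i := by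
    intro i
    have := hQt1 (Sum.inr i)
    rw [mulVec_expand] at this
    rw [Fintype.sum_sum_type] at this
    simp only [Matrix.fromBlocks_apply₂₁, Matrix.fromBlocks_apply₂₂, Matrix.neg_apply,
      Pi.one_apply, mul_one, Finset.sum_neg_distrib] at this
    rw [mulVec_expand, mulVec_expand]
    simp only [Pi.one_apply, mul_one]
    linarith [this]
  -- a nonnegative solution with row sums at most 1, to bound Φt
  obtain ⟨Z, hZpos, hZeq, hZrow⟩ := exists_bounded_sol At Bt Ct Dt hAt_off hDt_off hBt0 hCt0
    (fun i => (hA1 i).le) (fun i => (hD1 i).le)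
  have hΦtZ := hΦtMin Z hZpos hZeq
  have hy : ∀ i, (Φt *ᵥ 1) i ≤ 1 := by
    intro i
    have h1 : (Φt *ᵥ 1) i ≤ (Z *ᵥ 1) i :=
      mulVec_mono_left hΦtZ (fun j => zero_le_one) i
    exact h1.trans (hZrow i)
  -- positivity for Dt - Ct Φt with vector 1
  have hS1 : ∀ i, 0 < ((Dt - Ct * Φt) *ᵥ 1) i := by
    intro i
    have e : ((Dt - Ct * Φt) *ᵥ (1 : Fin n → ℝ)) = Dt *ᵥ 1 - Ct *ᵥ (Φt *ᵥ 1) := by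
      rw [Matrix.sub_mulVec, ← Matrix.mulVec_mulVec]
    rw [e]
    have h1 : (Ct *ᵥ (Φt *ᵥ 1)) i ≤ (Ct *ᵥ 1) i := mulVec_mono_right hCt0 hy i
    have := hD1 i
    simp only [Pi.sub_apply]
    linarith
  -- the NARE applied to the all-ones vector
  have hveq : Φt *ᵥ (Ct *ᵥ (Φt *ᵥ 1)) - Φt *ᵥ (Dt *ᵥ 1) - At *ᵥ (Φt *ᵥ 1) + Bt *ᵥ 1
      = (0 : Fin m → ℝ) := by
    have := congrArg (fun M => M *ᵥ (1 : Fin n → ℝ)) hΦtSol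
    simpa [Matrix.add_mulVec, Matrix.sub_mulVec, ← Matrix.mulVec_mulVec,
      Matrix.zero_mulVec] using this
  -- positivity for At - Φt Ct with vector w = 1 - Φt 1
  set w : Fin m → ℝ := (1 : Fin m → ℝ) - Φt *ᵥ 1 with hwdef
  have hw0 : ∀ i, 0 ≤ w i := by
    intro i
    have := hy i
    simp only [hwdef, Pi.sub_apply, Pi.one_apply]
    linarith
  have hTwpos : ∀ i, 0 < ((At - Φt * Ct) *ᵥ w) i := by
    intro i
    have e : (At - Φt * Ct) *ᵥ w
        = At *ᵥ 1 - At *ᵥ (Φt *ᵥ 1) - (Φt *ᵥ (Ct *ᵥ 1) - Φt *ᵥ (Ct *ᵥ (Φt *ᵥ 1))) := by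
      rw [hwdef]
      simp only [Matrix.sub_mulVec, Matrix.mulVec_sub, ← Matrix.mulVec_mulVec]
      abel
    have c1 := congrFun e i
    have c2 := congrFun hveq i
    have hnn : 0 ≤ (Φt *ᵥ (Dt *ᵥ 1 - Ct *ᵥ 1)) i :=
      mulVec_nonneg' hΦtPos (fun j => by have := hD1 j; simp only [Pi.sub_apply]; linarith) i
    have c3 : (Φt *ᵥ (Dt *ᵥ 1 - Ct *ᵥ 1)) i = (Φt *ᵥ (Dt *ᵥ 1)) i - (Φt *ᵥ (Ct *ᵥ 1)) i := by
      rw [Matrix.mulVec_sub]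
      simp
    have hab := hA1 i
    simp only [Pi.sub_apply, Pi.add_apply, Pi.zero_apply] at c1 c2 c3
    rw [c1]
    linarith
  have hToff : ∀ i j, i ≠ j → (At - Φt * Ct) i j ≤ 0 := by
    intro i j hij
    have h1 := matmul_nonneg hΦtPos hCt0 i j
    have h2 := hAt_off i j hij
    simp only [Matrix.sub_apply]
    linarith
  have hwpos : ∀ i, 0 < w i := by
    intro i
    rcases lt_or_eq_of_le (hw0 i) with h | h
    · exact h
    · exfalso
      have hz : (((At - Φt * Ct)) *ᵥ w) i ≤ 0 := by
        rw [mulVec_expand]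
        apply Finset.sum_nonpos
        intro j _
        by_cases hij : j = i
        · subst hij
          rw [← h, mul_zero]
        · exact mul_nonpos_of_nonpos_of_nonneg (hToff i j fun hc => hij hc.symm) (hw0 j)
      exact absurd (hTwpos i) (not_lt.mpr hz)
  -- comparison of omega-comparison matrices
  have hScomp : ∀ i j, (Dt - Ct * Φt) i j ≤ omegaComp ω (D - C * Φ) i j := by
    intro i j
    have habsCΦ := abs_matmul_le habsC hΦle i j
    by_cases hij : i = j
    · subst hij
      simp only [omegaComp, Matrix.of_apply, eq_self_iff_true, if_true, Matrix.sub_apply]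
      have key : wlin ω (D i i) - ‖(C * Φ) i i‖ ≤ wlin ω (D i i - (C * Φ) i i) := by
        have e : D i i - (C * Φ) i i = D i i + (-((C * Φ) i i)) := by ring
        rw [e, wlin_add]
        have h2 : |wlin ω (-((C * Φ) i i))| ≤ ‖(C * Φ) i i‖ := by
          simpa using abs_wlin_le hω0 hω1 (-((C * Φ) i i))
        linarith [(abs_le.mp h2).1]
      have := hDt_diag i
      linarith
    · simp only [omegaComp, Matrix.of_apply, if_neg hij, Matrix.sub_apply]
      have h3 : ‖D i j - (C * Φ) i j‖
          ≤ ‖D i j‖ + ‖(C * Φ) i j‖ := by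
        simpa [sub_eq_add_neg] using norm_add_le (D i j) (-((C * Φ) i j))
      have := hDt_offle i j hij
      linarith
  have hTcomp : ∀ i j, (At - Φt * Ct) i j ≤ omegaComp ω (A - Φ * C) i j := by
    intro i j
    have habsΦC := abs_matmul_le hΦle habsC i j
    by_cases hij : i = j
    · subst hij
      simp only [omegaComp, Matrix.of_apply, eq_self_iff_true, if_true, Matrix.sub_apply]
      have key : wlin ω (A i i) - ‖(Φ * C) i i‖ ≤ wlin ω (A i i - (Φ * C) i i) := by
        have e : A i i - (Φ * C) i i = A i i + (-((Φ * C) i i)) := by ring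
        rw [e, wlin_add]
        have h2 : |wlin ω (-((Φ * C) i i))| ≤ ‖(Φ * C) i i‖ := by
          simpa using abs_wlin_le hω0 hω1 (-((Φ * C) i i))
        linarith [(abs_le.mp h2).1]
      have := hAt_diag i
      linarith
    · simp only [omegaComp, Matrix.of_apply, if_neg hij, Matrix.sub_apply]
      have h3 : ‖A i j - (Φ * C) i j‖
          ≤ ‖A i j‖ + ‖(Φ * C) i j‖ := by
        simpa [sub_eq_add_neg] using norm_add_le (A i j) (-((Φ * C) i j))
      have := hAt_offle i j hij
      linarith
  -- spectral localization
  have specD : ∀ μ ∈ spectrum ℂ (D - C * Φ), 0 < wlin ω μ := by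
    refine spec_wlin_pos hω0 hω1 (D - C * Φ) 1 (fun i => one_pos) (fun i => ?_)
    exact lt_of_lt_of_le (hS1 i) (mulVec_mono_left hScomp (fun j => zero_le_one) i)
  have specA : ∀ μ ∈ spectrum ℂ (A - Φ * C), 0 < wlin ω μ := by
    refine spec_wlin_pos hω0 hω1 (A - Φ * C) w hwpos (fun i => ?_)
    exact lt_of_lt_of_le (hTwpos i) (mulVec_mono_left hTcomp hw0 i)
  -- nonsingularity
  have hdet : IsUnit (D - C * Φ).det := by
    by_contra hcon
    have hnu : ¬IsUnit (D - C * Φ) := fun h => hcon ((Matrix.isUnit_iff_isUnit_det _).mp h)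
    have h0 : (0 : ℂ) ∈ spectrum ℂ (D - C * Φ) := (spectrum.zero_mem_iff (R := ℂ)).mpr hnu
    have := specD 0 h0
    simp at this
  refine ⟨hdet, specD, ?_⟩
  -- uniqueness
  intro X hX hspecX
  have hiden : (A - Φ * C) * (Φ - X) + (Φ - X) * (D - C * X)
      = (X * C * X - X * D - A * X + B) - (Φ * C * Φ - Φ * D - A * Φ + B) := by
    simp only [Matrix.sub_mul, Matrix.mul_sub, ← Matrix.mul_assoc]
    abel
  have hsyl : (A - Φ * C) * (Φ - X) + (Φ - X) * (D - C * X) = 0 := by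
    rw [hiden, hX, hΦSol, sub_zero]
  have hzero := sylvester_unique (A - Φ * C) (D - C * X) (by
    intro μ hμ ν hν heq
    have h1 := specA μ hμ
    have h2 := hspecX ν hν
    have h3 : wlin ω (μ + ν) = wlin ω μ + wlin ω ν := wlin_add ω μ ν
    rw [heq, wlin_zero] at h3
    linarith) (Φ - X) hsyl
  have := sub_eq_zero.mp hzero
  exact this.symm
end
end
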